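/- Let α > 0. Then lim_{x→∞} ( x + α − P_α(x) ) = 0. -/

import Mathlib

open MeasureTheory Set Filter

/-- `F(x+iy) = ∫₀^∞ t e^{-t}/((x-t)² + y²) dt`. -/
noncomputable def Fint (x y : ℝ) : ℝ :=
  ∫ t in Set.Ioi (0:ℝ), t * Real.exp (-t) / ((x - t)^2 + y^2)

/-- `H_α(z) = z + α + α ∫₀^∞ t e^{-t}/(z-t) dt`. -/
noncomputable def Hfun (α : ℝ) (z : ℂ) : ℂ :=
  z + (α : ℂ) + (α : ℂ) * ∫ t in Set.Ioi (0:ℝ), ((t * Real.exp (-t) : ℝ) : ℂ) / (z - (t : ℂ))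

lemma base_integral : ∫ t in Set.Ioi (0:ℝ), t * Real.exp (-t) = 1 := by
  have h := Real.Gamma_eq_integral (by norm_num : (0:ℝ) < 2)
  rw [Real.Gamma_two] at h
  rw [show (1:ℝ) = ∫ x in Set.Ioi (0:ℝ), Real.exp (-x) * x ^ ((2:ℝ) - 1) from h]
  apply setIntegral_congr_fun measurableSet_Ioi
  intro t ht
  norm_num [Real.rpow_one]; ring

lemma base_integrable : IntegrableOn (fun t => t * Real.exp (-t)) (Set.Ioi (0:ℝ)) := by
  have h := Real.GammaIntegral_convergent (by norm_num : (0:ℝ) < 2)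
  refine h.congr_fun ?_ measurableSet_Ioi
  intro t ht
  norm_num [Real.rpow_one]; ring

lemma exp4_integral : ∫ t in Set.Ioi (0:ℝ), Real.exp (-t/4) = 4 := by
  have h := integral_comp_mul_left_Ioi (fun u => Real.exp (-u)) 0 (show (0:ℝ) < 1/4 by norm_num)
  simp only [mul_zero, integral_exp_neg_Ioi] at h
  rw [show (fun t:ℝ => Real.exp (-t/4)) = (fun t:ℝ => Real.exp (-(1/4*t))) from by funext t; ring_nf]
  rw [h]; norm_num

lemma exp4_integrable : IntegrableOn (fun t => Real.exp (-t/4)) (Set.Ioi (0:ℝ)) := by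
  have h := exp_neg_integrableOn_Ioi 0 (show (0:ℝ) < 1/4 by norm_num)
  refine h.congr_fun ?_ measurableSet_Ioi
  intro t ht
  norm_num; ring_nf

lemma key_bound (α x y : ℝ) (hα : 0 < α) (hy : 0 < y) (hx : 2 ≤ x)
    (hF : Fint x y = 1/α) (p : ℝ)
    (hp : (p : ℂ) = Hfun α ((x:ℂ) + (y:ℝ) * Complex.I)) :
    |x + α - p| ≤ 2*α/x + (8*α+1) * Real.exp (-x/16) := by
  have hx0 : (0:ℝ) < x := by linarith
  set z : ℂ := (x:ℂ) + (y:ℂ) * Complex.I with hz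
  have hzre : ∀ t:ℝ, (z - (t:ℂ)).re = x - t := by intro t; simp [hz]
  have hzim : ∀ t:ℝ, (z - (t:ℂ)).im = y := by intro t; simp [hz]
  have hzne : ∀ t:ℝ, z - (t:ℂ) ≠ 0 := by
    intro t h
    have := hzim t
    rw [h] at this
    simp at this
    exact hy.ne' this.symm
  have hDpos : ∀ t:ℝ, 0 < (x-t)^2 + y^2 := fun t => by positivity
  -- complex integrand
  set fc : ℝ → ℂ := fun t => ((t * Real.exp (-t) : ℝ) : ℂ) / (z - (t:ℂ)) with hfc
  have hfc_cont : Continuous fc := by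
    apply Continuous.div
    · exact Complex.continuous_ofReal.comp (by continuity)
    · continuity
    · exact hzne
  have hfc_int : IntegrableOn fc (Set.Ioi (0:ℝ)) := by
    apply Integrable.mono' (base_integrable.div_const y)
    · exact hfc_cont.aestronglyMeasurable.restrict
    · filter_upwards [ae_restrict_mem measurableSet_Ioi] with t ht
      have ht0 : 0 < t := ht
      have h1 : ‖fc t‖ = t * Real.exp (-t) / ‖z - t‖ := by
        rw [hfc]
        simp only [norm_div, Complex.norm_real, Real.norm_eq_abs]
        rw [abs_of_nonneg (by positivity : (0:ℝ) ≤ t * Real.exp (-t))]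
      rw [h1]
      apply div_le_div_of_nonneg_left (by positivity) hy
      calc y = |(z - (t:ℂ)).im| := by rw [hzim]; exact (abs_of_pos hy).symm
        _ ≤ ‖z - t‖ := Complex.abs_im_le_norm _
  -- real integrand
  set f : ℝ → ℝ := fun t => t * Real.exp (-t) * (x - t) / ((x - t)^2 + y^2) with hf
  have hre : ∀ t:ℝ, (fc t).re = f t := by
    intro t
    have hns : Complex.normSq (z - (t:ℂ)) = (x - t)^2 + y^2 := by
      rw [Complex.normSq_apply, hzre, hzim]; ring
    rw [hfc]
    simp only [Complex.div_re, hns, hzre, hzim, Complex.ofReal_re, Complex.ofReal_im]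
    simp [hf]
  have hf_int : IntegrableOn f (Set.Ioi (0:ℝ)) := by
    have h2 := hfc_int.re
    refine MeasureTheory.IntegrableOn.congr_fun h2 ?_ measurableSet_Ioi
    intro t _
    simp only [RCLike.re_to_complex]
    exact hre t
  -- p = x + α + α * ∫ f
  have hPx : p = x + α + α * ∫ t in Set.Ioi (0:ℝ), f t := by
    have h1 := congrArg Complex.re hp
    rw [Hfun] at h1
    have hW : (∫ t in Set.Ioi (0:ℝ), ((t * Real.exp (-t) : ℝ) : ℂ) / (z - (t:ℂ))).re
        = ∫ t in Set.Ioi (0:ℝ), f t := by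
      have h3 := integral_re hfc_int
      simp only [RCLike.re_to_complex] at h3
      rw [← h3]
      apply setIntegral_congr_fun measurableSet_Ioi
      intro t _
      exact hre t
    simp only [Complex.add_re, Complex.mul_re, Complex.ofReal_re, Complex.ofReal_im,
      Complex.mul_im, Complex.I_re, Complex.I_im, Complex.ofReal_re] at h1
    rw [hW] at h1
    simp [hz] at h1 ⊢
    linarith [h1]
  -- the bound
  set δ := Real.exp (-x/16) with hδ
  have hδpos : 0 < δ := Real.exp_pos _
  have hker_int : IntegrableOn (fun t => t * Real.exp (-t) / ((x - t)^2 + y^2)) (Set.Ioi (0:ℝ)) := by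
    by_contra h
    rw [Fint, integral_undef h] at hF
    exact (one_div_pos.2 hα).ne' hF.symm
  set G : ℝ → ℝ := fun t => (2/x) * (t * Real.exp (-t)) + (2*δ) * Real.exp (-t/4)
      + δ * (t * Real.exp (-t) / ((x - t)^2 + y^2)) with hG
  have hG_int : IntegrableOn G (Set.Ioi (0:ℝ)) :=
    ((base_integrable.const_mul _).add (exp4_integrable.const_mul _)).add (hker_int.const_mul _)
  have habs : ∀ t ∈ Set.Ioi (0:ℝ), |f t| ≤ G t := by
    intro t ht
    have ht0 : (0:ℝ) < t := ht
    have hte : 0 ≤ t * Real.exp (-t) := by positivity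
    have habsf : |f t| = t * Real.exp (-t) * |x - t| / ((x - t)^2 + y^2) := by
      rw [hf, abs_div, abs_of_pos (hDpos t), abs_mul, abs_of_nonneg hte]
    have hT1 : 0 ≤ (2/x) * (t * Real.exp (-t)) := by positivity
    have hT2 : 0 ≤ (2*δ) * Real.exp (-t/4) := by positivity
    have hT3 : 0 ≤ δ * (t * Real.exp (-t) / ((x - t)^2 + y^2)) := by positivity
    rw [habsf, hG]
    have hinv : ∀ w : ℝ, 0 < |x - t| → |x - t| ≤ w →
        t * Real.exp (-t) * |x - t| / ((x - t)^2 + y^2) ≤ t * Real.exp (-t) / |x - t| := by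
      intro w hu0 _
      calc t * Real.exp (-t) * |x - t| / ((x - t)^2 + y^2)
          ≤ t * Real.exp (-t) * |x - t| / (x - t)^2 := by
            gcongr
            · rw [← sq_abs]; positivity
            · nlinarith [sq_nonneg y]
        _ = t * Real.exp (-t) / |x - t| := by
            rw [show ((x - t):ℝ)^2 = |x - t| * |x - t| from by rw [← sq_abs]; ring,
              div_eq_div_iff (mul_pos hu0 hu0).ne' hu0.ne']
            ring
    rcases le_or_gt (x/2) |x - t| with h1 | h1
    · have hu0 : 0 < |x - t| := lt_of_lt_of_le (by linarith) h1
      have key : t * Real.exp (-t) * |x - t| / ((x - t)^2 + y^2) ≤ 2/x * (t * Real.exp (-t)) := by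
        calc t * Real.exp (-t) * |x - t| / ((x - t)^2 + y^2)
            ≤ t * Real.exp (-t) / |x - t| := hinv _ hu0 le_rfl
          _ ≤ t * Real.exp (-t) / (x/2) := div_le_div_of_nonneg_left hte (by linarith) h1
          _ = 2/x * (t * Real.exp (-t)) := by field_simp
      linarith
    · rcases le_or_gt δ |x - t| with h2 | h2
      · have hu0 : 0 < |x - t| := lt_of_lt_of_le hδpos h2
        have htx : x/2 < t := by
          have h4 := (abs_lt.1 h1).2
          linarith
        have e1 : t * Real.exp (-t) ≤ 2 * Real.exp (-t/2) := by
          have h5 : t ≤ 2 * Real.exp (t/2) := by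
            have := Real.add_one_le_exp (t/2); linarith
          calc t * Real.exp (-t) ≤ 2 * Real.exp (t/2) * Real.exp (-t) :=
              mul_le_mul_of_nonneg_right h5 (Real.exp_pos _).le
            _ = 2 * Real.exp (-t/2) := by rw [mul_assoc, ← Real.exp_add]; ring_nf
        have key : t * Real.exp (-t) * |x - t| / ((x - t)^2 + y^2) ≤ 2*δ * Real.exp (-t/4) := by
          have s1 := hinv _ hu0 le_rfl
          have s2 : t * Real.exp (-t) / |x - t| ≤ t * Real.exp (-t) / δ :=
            div_le_div_of_nonneg_left hte hδpos h2
          have s3 : t * Real.exp (-t) / δ ≤ 2*δ * Real.exp (-t/4) := by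
            rw [div_le_iff₀ hδpos]
            have q1 : Real.exp (-t/2) = Real.exp (-t/4) * Real.exp (-t/4) := by
              rw [← Real.exp_add]; ring_nf
            have q2 : Real.exp (-t/4) ≤ δ * δ := by
              rw [hδ, ← Real.exp_add]
              apply Real.exp_le_exp.2; linarith
            calc t * Real.exp (-t) ≤ 2 * Real.exp (-t/2) := e1
              _ = 2 * (Real.exp (-t/4) * Real.exp (-t/4)) := by rw [q1]
              _ ≤ 2 * (Real.exp (-t/4) * (δ * δ)) := by
                  have := (Real.exp_pos (-t/4)).le
                  nlinarith [q2]
              _ = 2*δ * Real.exp (-t/4) * δ := by ring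
          linarith
        linarith
      · have key : t * Real.exp (-t) * |x - t| / ((x - t)^2 + y^2)
            ≤ δ * (t * Real.exp (-t) / ((x - t)^2 + y^2)) := by
          rw [show δ * (t * Real.exp (-t) / ((x - t)^2 + y^2))
              = t * Real.exp (-t) * δ / ((x - t)^2 + y^2) from by ring]
          exact (div_le_div_iff_of_pos_right (hDpos t)).2 (mul_le_mul_of_nonneg_left h2.le hte)
        linarith
  have step1 : |∫ t in Set.Ioi (0:ℝ), f t| ≤ ∫ t in Set.Ioi (0:ℝ), G t := by
    refine (norm_integral_le_integral_norm f).trans ?_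
    exact setIntegral_mono_on hf_int.norm hG_int measurableSet_Ioi habs
  have hGval : ∫ t in Set.Ioi (0:ℝ), G t = 2/x + 8*δ + δ * (1/α) := by
    have e0 : (∫ t in Set.Ioi (0:ℝ), G t)
        = ∫ t in Set.Ioi (0:ℝ), ((2/x) * (t * Real.exp (-t)) + (2*δ) * Real.exp (-t/4))
          + δ * (t * Real.exp (-t) / ((x - t)^2 + y^2)) := rfl
    have i1 : IntegrableOn (fun t:ℝ => (2/x) * (t * Real.exp (-t)) + (2*δ) * Real.exp (-t/4))
        (Set.Ioi (0:ℝ)) := (base_integrable.const_mul _).add (exp4_integrable.const_mul _)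
    rw [e0, integral_add i1 (hker_int.const_mul _),
      integral_add (base_integrable.const_mul _) (exp4_integrable.const_mul _),
      integral_const_mul, integral_const_mul, integral_const_mul, base_integral, exp4_integral]
    have hFv : (∫ t in Set.Ioi (0:ℝ), t * Real.exp (-t) / ((x - t)^2 + y^2)) = 1/α := hF
    rw [hFv]
    ring
  rw [hPx]
  have hfin : |x + α - (x + α + α * ∫ t in Set.Ioi (0:ℝ), f t)|
      = α * |∫ t in Set.Ioi (0:ℝ), f t| := by
    rw [show x + α - (x + α + α * ∫ t in Set.Ioi (0:ℝ), f t)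
        = -(α * ∫ t in Set.Ioi (0:ℝ), f t) from by ring, abs_neg, abs_mul,
      abs_of_pos hα]
  rw [hfin]
  have hle : α * |∫ t in Set.Ioi (0:ℝ), f t| ≤ α * (2/x + 8*δ + δ * (1/α)) := by
    apply mul_le_mul_of_nonneg_left _ hα.le
    rw [← hGval]; exact step1
  have heq : α * (2/x + 8*δ + δ * (1/α)) = 2*α/x + (8*α+1) * δ := by
    field_simp
    ring
  linarith

/-- `lim_{x→∞} (x + α − P_α(x)) = 0`. -/
theorem free_gamma_P_asymptotics
    (α : ℝ) (hα : 0 < α) (c : ℝ) (hc : 0 < c)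
    (hceq : (∫ t in Set.Ioi (0:ℝ), t * Real.exp (-t) / (c + t)^2) = 1/α)
    (v : ℝ → ℝ) (hv0 : ∀ x ≤ -c, v x = 0)
    (hvpos : ∀ x, -c < x → 0 < v x)
    (hveq : ∀ x, -c < x → Fint x (v x) = 1/α)
    (hvuniq : ∀ x, -c < x → ∀ y, 0 < y → Fint x y = 1/α → y = v x)
    (P : ℝ → ℝ)
    (hP : ∀ x : ℝ, ((P x : ℝ) : ℂ) = Hfun α ((x : ℂ) + (v x : ℝ) * Complex.I)) :
    Filter.Tendsto (fun x => x + α - P x) Filter.atTop (nhds 0) := by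
  have hB : Tendsto (fun x:ℝ => 2*α/x + (8*α+1) * Real.exp (-x/16)) atTop (nhds 0) := by
    have t1 : Tendsto (fun x:ℝ => 2*α/x) atTop (nhds (0:ℝ)) :=
      Tendsto.div_atTop tendsto_const_nhds tendsto_id
    have t2 : Tendsto (fun x:ℝ => Real.exp (-x/16)) atTop (nhds (0:ℝ)) := by
      apply Real.tendsto_exp_atBot.comp
      have h3 : Tendsto (fun x:ℝ => x/16) atTop atTop := tendsto_id.atTop_div_const (by norm_num)
      have h4 := tendsto_neg_atTop_atBot.comp h3
      have : (fun x:ℝ => -x/16) = (fun x:ℝ => -(x/16)) := by funext u; ring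
      rw [this]
      exact h4
    have h5 := t1.add (t2.const_mul (8*α+1))
    simpa [mul_comm] using h5
  rw [tendsto_zero_iff_abs_tendsto_zero]
  apply squeeze_zero' (Eventually.of_forall (fun x => abs_nonneg _)) ?_ hB
  filter_upwards [eventually_ge_atTop (2:ℝ), eventually_gt_atTop (-c)] with x hx2 hxc
  exact key_bound α x (v x) hα (hvpos x hxc) hx2 (hveq x hxc) (P x) (hP x)
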